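/- The matrix exponential maps 𝕋_n(ℝ) onto 𝕋_n^+(ℝ): exp(𝕋_n(ℝ)) = 𝕋_n^+(ℝ). -/

import Mathlib

open NormedSpace

/-- `A` is lower triangular with all diagonal entries equal (the set `𝕋_n(K)`). -/
def LowerTriConstDiag {K : Type*} [Semiring K] {n : ℕ}
    (A : Matrix (Fin n) (Fin n) K) : Prop :=
  (∀ i j : Fin n, i < j → A i j = 0) ∧ ∀ i j : Fin n, A i i = A j j

section Aux

open Polynomial Finset Matrix

/- ### Polynomial preliminaries: truncated log and its exponential -/

noncomputable def logP (N : ℕ) : Polynomial ℝ :=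
  ∑ k ∈ Finset.range (N+1), Polynomial.C ((-1)^k / (k+1) : ℝ) * Polynomial.X^(k+1)

noncomputable def expQ (N : ℕ) : Polynomial ℝ :=
  ∑ m ∈ Finset.range (N+1), Polynomial.C ((m.factorial : ℝ)⁻¹) * (logP N)^m

lemma logP_coeff_zero (N : ℕ) : (logP N).coeff 0 = 0 := by
  simp [logP, Polynomial.finset_sum_coeff, Polynomial.coeff_C_mul,
    Polynomial.coeff_X_pow]

lemma X_dvd_logP (N : ℕ) : Polynomial.X ∣ logP N :=
  Polynomial.X_dvd_iff.2 (logP_coeff_zero N)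

lemma logP_pow_coeff (N m j : ℕ) (hj : j < m) : ((logP N)^m).coeff j = 0 := by
  have h : Polynomial.X^m ∣ (logP N)^m := pow_dvd_pow_of_dvd (X_dvd_logP N) m
  exact (Polynomial.X_pow_dvd_iff.1 h) j hj

lemma derivative_logP (N : ℕ) :
    Polynomial.derivative (logP N) = ∑ k ∈ Finset.range (N+1), (-Polynomial.X)^k := by
  rw [logP, map_sum]
  refine Finset.sum_congr rfl fun k _ => ?_
  rw [Polynomial.derivative_C_mul, Polynomial.derivative_X_pow, Nat.add_sub_cancel,
    ← mul_assoc, ← Polynomial.C_mul]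
  have : ((-1:ℝ))^k/((k:ℝ)+1) * ((k+1:ℕ):ℝ) = (-1)^k := by
    push_cast
    have : ((k:ℝ)+1) ≠ 0 := by positivity
    field_simp
  rw [this]
  have hC : Polynomial.C ((-1:ℝ)^k) = (-1 : Polynomial ℝ)^k := by simp
  rw [hC, ← mul_pow, neg_one_mul]

lemma one_add_X_mul_derivative_logP (N : ℕ) :
    (1 + Polynomial.X) * Polynomial.derivative (logP N) = 1 - (-Polynomial.X)^(N+1) := by
  have h := geom_sum_mul (-Polynomial.X : Polynomial ℝ) (N+1)
  rw [derivative_logP]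
  linear_combination -h

lemma derivative_expQ (N : ℕ) :
    Polynomial.derivative (expQ N) =
      (expQ N - Polynomial.C ((N.factorial : ℝ)⁻¹) * (logP N)^N) *
        Polynomial.derivative (logP N) := by
  have expQ_def : expQ N
      = ∑ m ∈ Finset.range (N+1), Polynomial.C ((m.factorial : ℝ)⁻¹) * (logP N)^m := rfl
  rw [expQ_def, map_sum]
  have : ∀ m ∈ Finset.range (N+1),
      Polynomial.derivative (Polynomial.C ((m.factorial : ℝ)⁻¹) * (logP N)^m)
        = Polynomial.C ((m.factorial : ℝ)⁻¹) * (Polynomial.C (m:ℝ) * (logP N)^(m-1) *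
            Polynomial.derivative (logP N)) := by
    intro m _
    rw [Polynomial.derivative_C_mul, Polynomial.derivative_pow]
  rw [Finset.sum_congr rfl this]
  rw [Finset.sum_range_succ']
  simp only [Nat.cast_zero, Polynomial.C_0, zero_mul, mul_zero, add_zero]
  have hterm : ∀ m : ℕ,
      Polynomial.C (((m+1).factorial : ℝ)⁻¹) * (Polynomial.C ((m+1:ℕ):ℝ) * (logP N)^(m+1-1) *
        Polynomial.derivative (logP N))
      = Polynomial.C ((m.factorial : ℝ)⁻¹) * (logP N)^m * Polynomial.derivative (logP N) := by
    intro m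
    have : (((m+1).factorial : ℝ))⁻¹ * ((m+1:ℕ):ℝ) = ((m.factorial : ℝ))⁻¹ := by
      rw [Nat.factorial_succ]
      push_cast
      have h1 : (m.factorial : ℝ) ≠ 0 := Nat.cast_ne_zero.2 m.factorial_ne_zero
      have h2 : ((m:ℝ)+1) ≠ 0 := by positivity
      field_simp
    rw [Nat.add_sub_cancel, ← mul_assoc, ← mul_assoc, ← Polynomial.C_mul, this]
  rw [Finset.sum_congr rfl (fun m _ => hterm m)]
  rw [← Finset.sum_mul, sub_mul]
  rw [Finset.sum_range_succ]
  ring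

lemma expQ_coeff_eq (N : ℕ) : ∀ j < N + 1,
    (expQ N).coeff j = (1 + Polynomial.X : Polynomial ℝ).coeff j := by
  set h : Polynomial ℝ := expQ N - (1 + Polynomial.X) with hh
  suffices H : ∀ j < N + 1, h.coeff j = 0 by
    intro j hj
    have := H j hj
    rw [hh, Polynomial.coeff_sub, sub_eq_zero] at this
    exact this
  have key : (1 + Polynomial.X) * Polynomial.derivative h
      = h - Polynomial.C ((N.factorial : ℝ)⁻¹) * (logP N)^N
        - (-Polynomial.X)^(N+1) * (expQ N - Polynomial.C ((N.factorial : ℝ)⁻¹) * (logP N)^N) := by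
    have d1 : Polynomial.derivative h = Polynomial.derivative (expQ N) - 1 := by
      rw [hh]; simp
    rw [d1, mul_sub, derivative_expQ, ← mul_assoc,
      mul_comm (1 + Polynomial.X) (expQ N - _), mul_assoc, one_add_X_mul_derivative_logP,
      hh]
    ring
  have hXpow : ∀ (E : Polynomial ℝ) (j : ℕ), j < N + 1 →
      ((-Polynomial.X)^(N+1) * E).coeff j = 0 := by
    intro E j hj
    have hdvd : Polynomial.X^(N+1) ∣ (-Polynomial.X)^(N+1) * E :=
      ⟨(-1)^(N+1) * E, by ring⟩
    exact (Polynomial.X_pow_dvd_iff.1 hdvd) j hj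
  have hc0 : h.coeff 0 = 0 := by
    have : (expQ N).coeff 0 = 1 := by
      have expQ_def : expQ N
          = ∑ m ∈ Finset.range (N+1), Polynomial.C ((m.factorial : ℝ)⁻¹) * (logP N)^m := rfl
      rw [expQ_def, Polynomial.finset_sum_coeff, Finset.sum_range_succ']
      have hz : ∀ m ∈ Finset.range N,
          (Polynomial.C ((((m+1).factorial : ℕ) : ℝ)⁻¹) * (logP N)^(m+1)).coeff 0 = 0 := by
        intro m _
        rw [Polynomial.coeff_C_mul, logP_pow_coeff N (m+1) 0 (Nat.succ_pos m), mul_zero]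
      rw [Finset.sum_congr rfl hz]
      simp
    rw [hh]
    simp [this]
  intro j
  induction j using Nat.strong_induction_on with
  | _ j IH =>
    intro hj
    match j, hj with
    | 0, _ => exact hc0
    | (d+1), hj =>
      have hd : d < N + 1 := Nat.lt_of_succ_lt hj
      have hdN : d < N := Nat.lt_of_succ_lt_succ hj
      have hcd := congrArg (fun f => Polynomial.coeff f d) key
      simp only [Polynomial.coeff_sub, Polynomial.coeff_add] at hcd
      rw [add_mul, one_mul, Polynomial.coeff_add, Polynomial.coeff_derivative,
        Polynomial.coeff_C_mul, logP_pow_coeff N N d hdN, hXpow _ d hd,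
        IH d (Nat.lt_succ_self d) hd] at hcd
      have hXD : (Polynomial.X * Polynomial.derivative h).coeff d = 0 := by
        cases d with
        | zero => simp [Polynomial.mul_coeff_zero]
        | succ e =>
          rw [Polynomial.coeff_X_mul, Polynomial.coeff_derivative,
            IH (e+1) (by omega) (by omega)]
          ring
      rw [hXD] at hcd
      have : h.coeff (d+1) * ((d:ℝ)+1) = 0 := by linarith [hcd]
      have hne : ((d:ℝ)+1) ≠ 0 := by positivity
      exact (mul_eq_zero.1 this).resolve_right hne

lemma expQ_sub_dvd (N : ℕ) :
    Polynomial.X^(N+1) ∣ expQ N - (1 + Polynomial.X) := by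
  rw [Polynomial.X_pow_dvd_iff]
  intro d hd
  rw [Polynomial.coeff_sub, expQ_coeff_eq N d hd, sub_self]

/- ### Matrix preliminaries -/

variable {n : ℕ}

/-- strictly lower triangular (zero on and above diagonal) -/
def MatSLT (A : Matrix (Fin n) (Fin n) ℝ) : Prop :=
  ∀ i j : Fin n, (i:ℕ) ≤ (j:ℕ) → A i j = 0

lemma MatSLT.pow_apply {A : Matrix (Fin n) (Fin n) ℝ} (hA : MatSLT A) :
    ∀ (k : ℕ) (i j : Fin n), (i:ℕ) < (j:ℕ) + k → (A^k) i j = 0 := by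
  intro k
  induction k with
  | zero =>
    intro i j hij
    rw [pow_zero]
    exact Matrix.one_apply_ne (by intro h; subst h; omega)
  | succ k IH =>
    intro i j hij
    rw [pow_succ, Matrix.mul_apply]
    refine Finset.sum_eq_zero fun l _ => ?_
    rcases le_or_gt (l:ℕ) (j:ℕ) with h | h
    · rw [hA l j h, mul_zero]
    · rw [IH i l (by omega), zero_mul]

lemma MatSLT.pow_eq_zero {A : Matrix (Fin n) (Fin n) ℝ} (hA : MatSLT A) :
    A ^ n = 0 := by
  ext i j
  rw [hA.pow_apply n i j (by omega)]
  rfl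

lemma exp_of_pow_eq_zero (L : Matrix (Fin n) (Fin n) ℝ) (h : L ^ n = 0) :
    exp L = ∑ m ∈ Finset.range n, ((m.factorial : ℝ))⁻¹ • L ^ m := by
  letI : SeminormedRing (Matrix (Fin n) (Fin n) ℝ) := Matrix.linftyOpSemiNormedRing
  letI : NormedRing (Matrix (Fin n) (Fin n) ℝ) := Matrix.linftyOpNormedRing
  letI : NormedAlgebra ℝ (Matrix (Fin n) (Fin n) ℝ) := Matrix.linftyOpNormedAlgebra
  rw [NormedSpace.exp_eq_tsum ℝ]
  refine tsum_eq_sum fun m hm => ?_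
  rw [Finset.mem_range, not_lt] at hm
  have : L ^ m = 0 := by
    calc L ^ m = L ^ n * L ^ (m - n) := by rw [← pow_add]; congr 1; omega
    _ = 0 := by rw [h, zero_mul]
  rw [this, smul_zero]

lemma exp_smul_one (c : ℝ) :
    exp (c • (1 : Matrix (Fin n) (Fin n) ℝ)) = Real.exp c • (1 : Matrix (Fin n) (Fin n) ℝ) := by
  letI : SeminormedRing (Matrix (Fin n) (Fin n) ℝ) := Matrix.linftyOpSemiNormedRing
  letI : NormedRing (Matrix (Fin n) (Fin n) ℝ) := Matrix.linftyOpNormedRing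
  letI : NormedAlgebra ℝ (Matrix (Fin n) (Fin n) ℝ) := Matrix.linftyOpNormedAlgebra
  have h1 : c • (1 : Matrix (Fin n) (Fin n) ℝ) = algebraMap ℝ _ c :=
    (Algebra.algebraMap_eq_smul_one c).symm
  rw [h1]
  exact (NormedSpace.algebraMap_exp_comm (𝔸 := Matrix (Fin n) (Fin n) ℝ) c).symm.trans
    (by rw [Algebra.algebraMap_eq_smul_one, Real.exp_eq_exp_ℝ])

end Aux

/-- Appendix (i): `exp(𝕋_n(ℝ)) = 𝕋_n⁺(ℝ)`, the lower triangular matrices with constant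
strictly positive diagonal. -/
theorem exp_image_lowerTri_real (n : ℕ) :
    exp '' {A : Matrix (Fin n) (Fin n) ℝ | LowerTriConstDiag A} =
      {A : Matrix (Fin n) (Fin n) ℝ | LowerTriConstDiag A ∧ ∀ i, 0 < A i i} := by
  ext B
  constructor
  · -- forward inclusion
    rintro ⟨A, ⟨hlow, hdiag⟩, rfl⟩
    rcases Nat.eq_zero_or_pos n with hn | hn
    · subst hn
      exact ⟨⟨fun i => i.elim0, fun i => i.elim0⟩, fun i => i.elim0⟩
    set i0 : Fin n := ⟨0, hn⟩
    set μ : ℝ := A i0 i0 with hμdef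
    set N : Matrix (Fin n) (Fin n) ℝ := A - μ • 1 with hNdef
    have hN : MatSLT N := by
      intro i j hij
      rcases eq_or_lt_of_le hij with h | h
      · have hij' : i = j := Fin.ext h
        subst hij'
        simp [hNdef, Matrix.sub_apply, Matrix.smul_apply, Matrix.one_apply_eq,
          hdiag i i0, hμdef]
      · have : A i j = 0 := hlow i j (by exact h)
        simp [hNdef, Matrix.sub_apply, Matrix.smul_apply, Matrix.one_apply_ne
          (by intro he; subst he; omega : i ≠ j), this]
    have hA : A = μ • 1 + N := by rw [hNdef]; abel
    have hcomm : Commute (μ • (1 : Matrix (Fin n) (Fin n) ℝ)) N :=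
      (Commute.one_left N).smul_left μ
    rw [hA, Matrix.exp_add_of_commute _ _ hcomm, exp_smul_one,
      exp_of_pow_eq_zero N hN.pow_eq_zero]
    set S : Matrix (Fin n) (Fin n) ℝ :=
      ∑ m ∈ Finset.range n, ((m.factorial : ℝ))⁻¹ • N ^ m with hSdef
    have hSlow : ∀ i j : Fin n, i < j → S i j = 0 := by
      intro i j hij
      rw [hSdef, Matrix.sum_apply]
      refine Finset.sum_eq_zero fun m _ => ?_
      rw [Matrix.smul_apply, hN.pow_apply m i j (by have := (Fin.lt_def).1 hij; omega),
        smul_zero]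
    have hSdiag : ∀ i : Fin n, S i i = 1 := by
      intro i
      rw [hSdef, Matrix.sum_apply]
      rw [Finset.sum_eq_single_of_mem 0 (Finset.mem_range.2 hn)]
      · simp
      · intro m _ hm
        rw [Matrix.smul_apply, hN.pow_apply m i i (by omega), smul_zero]
    refine ⟨⟨fun i j hij => ?_, fun i j => ?_⟩, fun i => ?_⟩
    · rw [Matrix.smul_mul, one_mul, Matrix.smul_apply, hSlow i j hij, smul_zero]
    · rw [Matrix.smul_mul, one_mul, Matrix.smul_apply, Matrix.smul_apply,
        hSdiag i, hSdiag j]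
    · rw [Matrix.smul_mul, one_mul, Matrix.smul_apply, hSdiag i, smul_eq_mul, mul_one]
      exact Real.exp_pos μ
  · -- reverse inclusion
    rintro ⟨⟨hlow, hdiag⟩, hpos⟩
    cases n with
    | zero =>
      refine ⟨0, ⟨fun i => i.elim0, fun i => i.elim0⟩, Subsingleton.elim _ _⟩
    | succ N =>
      set i0 : Fin (N+1) := ⟨0, Nat.succ_pos N⟩
      set μ : ℝ := B i0 i0 with hμdef
      have hμ : 0 < μ := hpos i0
      set M : Matrix (Fin (N+1)) (Fin (N+1)) ℝ := μ⁻¹ • B - 1 with hMdef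
      have hM : MatSLT M := by
        intro i j hij
        rcases eq_or_lt_of_le hij with h | h
        · have hij' : i = j := Fin.ext h
          subst hij'
          rw [hMdef, Matrix.sub_apply, Matrix.smul_apply, Matrix.one_apply_eq,
            hdiag i i0, ← hμdef, smul_eq_mul, inv_mul_cancel₀ hμ.ne', sub_self]
        · rw [hMdef, Matrix.sub_apply, Matrix.smul_apply,
            hlow i j (by exact h), Matrix.one_apply_ne (by intro he; subst he; omega : i ≠ j),
            smul_zero, sub_zero]
      have hMpow : M ^ (N+1) = 0 := hM.pow_eq_zero
      set L : Matrix (Fin (N+1)) (Fin (N+1)) ℝ := Polynomial.aeval M (logP N) with hLdef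
      have hLsum : L = ∑ k ∈ Finset.range (N+1),
          ((-1)^k / (k+1) : ℝ) • M^(k+1) := by
        have hlogP : logP N
            = ∑ k ∈ Finset.range (N+1), Polynomial.C ((-1)^k / (k+1) : ℝ)
              * Polynomial.X^(k+1) := rfl
        rw [hLdef, hlogP, map_sum]
        refine Finset.sum_congr rfl fun k _ => ?_
        rw [map_mul, map_pow, Polynomial.aeval_C, Polynomial.aeval_X, ← Algebra.smul_def]
      have hL : MatSLT L := by
        intro i j hij
        rw [hLsum, Matrix.sum_apply]
        refine Finset.sum_eq_zero fun k _ => ?_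
        rw [Matrix.smul_apply, hM.pow_apply (k+1) i j (by omega), smul_zero]
      refine ⟨Real.log μ • 1 + L, ⟨fun i j hij => ?_, fun i j => ?_⟩, ?_⟩
      · rw [Matrix.add_apply, Matrix.smul_apply,
          Matrix.one_apply_ne (by intro he; subst he; exact lt_irrefl _ hij : i ≠ j),
          smul_zero, hL i j (le_of_lt ((Fin.lt_def).1 hij)), add_zero]
      · rw [Matrix.add_apply, Matrix.add_apply, Matrix.smul_apply, Matrix.smul_apply,
          Matrix.one_apply_eq, Matrix.one_apply_eq, hL i i le_rfl, hL j j le_rfl]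
      · -- exp computation
        have hcomm : Commute (Real.log μ • (1 : Matrix (Fin (N+1)) (Fin (N+1)) ℝ)) L :=
          (Commute.one_left L).smul_left _
        rw [Matrix.exp_add_of_commute _ _ hcomm, exp_smul_one, Real.exp_log hμ]
        -- L ^ (N+1) = 0
        obtain ⟨r, hr⟩ := X_dvd_logP N
        have hcomMr : Commute M (Polynomial.aeval M r) := by
          have := (Commute.all Polynomial.X r).map (Polynomial.aeval M)
          simpa using this
        have hLpow : L ^ (N+1) = 0 := by
          rw [hLdef, hr, map_mul, Polynomial.aeval_X, hcomMr.mul_pow, hMpow, zero_mul]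
        rw [exp_of_pow_eq_zero L hLpow]
        have hsum : (∑ m ∈ Finset.range (N+1), ((m.factorial : ℝ))⁻¹ • L ^ m)
            = Polynomial.aeval M (expQ N) := by
          have hexpQ : expQ N
              = ∑ m ∈ Finset.range (N+1), Polynomial.C ((m.factorial : ℝ)⁻¹)
                * (logP N)^m := rfl
          rw [hexpQ, map_sum]
          refine Finset.sum_congr rfl fun m _ => ?_
          rw [map_mul, map_pow, Polynomial.aeval_C, ← Algebra.smul_def, hLdef]
        obtain ⟨s, hs⟩ := expQ_sub_dvd N
        have hexpQval : Polynomial.aeval M (expQ N) = 1 + M := by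
          have : expQ N = (1 + Polynomial.X) + Polynomial.X^(N+1) * s := by
            rw [← hs]; ring
          rw [this, map_add, map_add, map_one, Polynomial.aeval_X, map_mul, map_pow,
            Polynomial.aeval_X, hMpow, zero_mul, add_zero]
        rw [hsum, hexpQval]
        have h1M : (1 : Matrix (Fin (N+1)) (Fin (N+1)) ℝ) + M = μ⁻¹ • B := by
          rw [hMdef]; abel
        rw [h1M, Matrix.smul_mul, one_mul, smul_smul, mul_inv_cancel₀ hμ.ne', one_smul]
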